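/- arXiv:2306.10655 — 3 statements merged into one kernel-verified Lean document; each statement's English description precedes it below -/
import Mathlib

section
/- Let 0 < α < 1, γ > 0 and n ≥ 1. There is a unique real r_0 > 0 satisfying α e^{r_0} (n + γ r_0) = n; it satisfies n(n+γ)^{−1} log(1/α) < r_0 < log(1/α), and the bound |t_n| ≤ (1−α)^γ n! (γ r_0)^{−n−γ} (n + γ r_0)^{γ} holds. Moreover, for every r with 0 < r < log(1/α) one has |t_n| ≤ (1−α)^γ γ^{−n} n! r^{−n} (1 − α e^{r})^{−γ}. -/
/-- Pochhammer symbol `(γ)_l = γ(γ+1)⋯(γ+l−1)`. -/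
noncomputable def poch (γ : ℝ) (l : ℕ) : ℝ := ∏ i ∈ Finset.range l, (γ + i)

/-- Stirling numbers of the second kind. -/
def stirling2 : ℕ → ℕ → ℕ
  | 0, 0 => 1
  | 0, _+1 => 0
  | _+1, 0 => 0
  | n+1, k+1 => (k+1) * stirling2 n (k+1) + stirling2 n k

/-- `t_n(α,γ) = (−1)^n γ^{−n} ∑_{i=0}^n S(n,i) (γ)_i (α/(1−α))^i`. -/
noncomputable def tcoef (α γ : ℝ) (n : ℕ) : ℝ :=
  (-1)^n * (γ^n)⁻¹ *
    ∑ i ∈ Finset.range (n+1), (stirling2 n i : ℝ) * poch γ i * (α/(1-α))^i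

open Real Finset

lemma poch_nonneg {γ : ℝ} (hγ : 0 < γ) (l : ℕ) : 0 ≤ poch γ l :=
  Finset.prod_nonneg fun i _ => by positivity

lemma poch_succ (γ : ℝ) (l : ℕ) : poch γ (l+1) = poch γ l * (γ + l) :=
  Finset.prod_range_succ _ _

noncomputable def FF (γ : ℝ) (n : ℕ) (y : ℝ) : ℝ :=
  ∑ i ∈ Finset.range (n+1), poch γ i * y^i / i.factorial

lemma FF_hasDeriv (γ : ℝ) (n : ℕ) (y : ℝ) :
    HasDerivAt (FF γ n) (∑ i ∈ Finset.range n, poch γ (i+1) * y^i / i.factorial) y := by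
  have h : HasDerivAt (FF γ n)
      (∑ i ∈ Finset.range (n+1), poch γ i * ((i:ℝ) * y^(i-1)) / i.factorial) y := by
    apply HasDerivAt.fun_sum
    intro i _
    exact ((hasDerivAt_pow i y).const_mul (poch γ i)).div_const _
  convert h using 1
  rw [Finset.sum_range_succ' (fun i => poch γ i * ((i:ℝ) * y^(i-1)) / i.factorial) n]
  simp only [Nat.cast_zero, zero_mul, mul_zero, zero_div, add_zero]
  apply Finset.sum_congr rfl
  intro i _
  rw [poch_succ, Nat.factorial_succ, Nat.add_sub_cancel]
  have h1 : (i.factorial : ℝ) ≠ 0 := by positivity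
  push_cast
  field_simp

lemma FF_ineq {γ : ℝ} (hγ : 0 < γ) (n : ℕ) {y : ℝ} (hy : 0 ≤ y) :
    (1 - y) * (∑ i ∈ Finset.range n, poch γ (i+1) * y^i / i.factorial) ≤ γ * FF γ n y := by
  have expand : (1 - y) * (∑ i ∈ Finset.range n, poch γ (i+1) * y^i / i.factorial)
      = (∑ i ∈ Finset.range n, poch γ (i+1) * y^i / i.factorial)
        - (∑ i ∈ Finset.range n, poch γ (i+1) * y^(i+1) / i.factorial) := by
    rw [sub_mul, one_mul, Finset.mul_sum]
    congr 1
    apply Finset.sum_congr rfl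
    intro i _
    rw [pow_succ]; ring
  rw [expand]
  have e1 : ∀ i, poch γ (i+1) * y^i / i.factorial
      = γ * (poch γ i * y^i / i.factorial) + (i:ℝ) * (poch γ i * y^i / i.factorial) := by
    intro i
    rw [poch_succ]
    ring
  have e2 : (∑ i ∈ Finset.range n, poch γ (i+1) * y^(i+1) / i.factorial)
      = ∑ i ∈ Finset.range (n+1), (i:ℝ) * (poch γ i * y^i / i.factorial) := by
    rw [Finset.sum_range_succ' (fun i => (i:ℝ) * (poch γ i * y^i / i.factorial)) n]
    simp only [Nat.cast_zero, zero_mul, add_zero]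
    apply Finset.sum_congr rfl
    intro i _
    rw [Nat.factorial_succ]
    have h1 : (i.factorial : ℝ) ≠ 0 := by positivity
    push_cast
    field_simp
  rw [e2]
  simp only [e1, Finset.sum_add_distrib]
  rw [Finset.sum_range_succ (fun i => (i:ℝ) * (poch γ i * y^i / i.factorial)) n]
  have hnn : 0 ≤ (n:ℝ) * (poch γ n * y^n / n.factorial) := by
    have := poch_nonneg hγ n
    positivity
  have hFF : γ * FF γ n y = γ * (∑ i ∈ Finset.range n, poch γ i * y^i / i.factorial)
      + γ * (poch γ n * y^n / n.factorial) := by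
    rw [FF, Finset.sum_range_succ, mul_add]
  rw [hFF, Finset.mul_sum]
  have hlast : 0 ≤ γ * (poch γ n * y^n / n.factorial) := by
    have := poch_nonneg hγ n
    positivity
  linarith

lemma FF_le {γ : ℝ} (hγ : 0 < γ) (n : ℕ) {y : ℝ} (hy0 : 0 ≤ y) (hy1 : y < 1) :
    FF γ n y ≤ (1 - y) ^ (-γ) := by
  rcases eq_or_lt_of_le hy0 with h0 | h0
  · simp [FF, ← h0, Finset.sum_range_succ']
    simp [poch]
  -- H t = FF γ n t * (1-t)^γ antitone on [0,y]
  have key : AntitoneOn (fun t : ℝ => FF γ n t * (1-t)^γ) (Set.Icc 0 y) := by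
    have hd : ∀ t ∈ Set.Icc (0:ℝ) y, HasDerivAt (fun t : ℝ => FF γ n t * (1-t)^γ)
        ((∑ i ∈ Finset.range n, poch γ (i+1) * t^i / i.factorial) * (1-t)^γ
          + FF γ n t * (-1 * γ * (1-t)^(γ-1))) t := by
      intro t ht
      have ht1 : (1:ℝ) - t > 0 := by
        rcases ht with ⟨_, h2⟩; linarith
      have h1 : HasDerivAt (fun t : ℝ => (1-t)^γ) (-1 * γ * (1-t)^(γ-1)) t := by
        have := ((hasDerivAt_id t).const_sub 1).rpow_const (p := γ) (Or.inl (ne_of_gt ht1))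
        simpa using this
      exact (FF_hasDeriv γ n t).mul h1
    apply antitoneOn_of_deriv_nonpos (convex_Icc 0 y)
    · intro t ht
      exact ((hd t ht).continuousAt).continuousWithinAt
    · intro t ht
      have ht' : t ∈ Set.Icc (0:ℝ) y := interior_subset ht
      exact ((hd t ht').differentiableAt).differentiableWithinAt
    · intro t ht
      rw [interior_Icc] at ht
      have ht' : t ∈ Set.Icc (0:ℝ) y := ⟨le_of_lt ht.1, le_of_lt ht.2⟩
      rw [(hd t ht').deriv]
      have ht1 : (0:ℝ) < 1 - t := by
        have := ht.2; linarith
      have hsplit : (1-t)^γ = (1-t)^(γ-1) * (1-t) := by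
        nth_rewrite 1 [show γ = (γ-1)+1 by ring]
        rw [Real.rpow_add ht1, Real.rpow_one]
      have hkey := FF_ineq hγ n (le_of_lt ht.1)
      have hp1 : (0:ℝ) ≤ (1-t)^(γ-1) := Real.rpow_nonneg (le_of_lt ht1) _
      rw [hsplit]
      have : (∑ i ∈ Finset.range n, poch γ (i+1) * t^i / i.factorial) * ((1-t)^(γ-1) * (1-t))
          + FF γ n t * (-1 * γ * (1-t)^(γ-1))
          = (1-t)^(γ-1) * ((1-t) * (∑ i ∈ Finset.range n, poch γ (i+1) * t^i / i.factorial)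
            - γ * FF γ n t) := by ring
      rw [this]
      apply mul_nonpos_of_nonneg_of_nonpos hp1
      linarith
  have h := key (Set.mem_Icc.2 ⟨le_refl 0, hy0⟩) (Set.mem_Icc.2 ⟨hy0, le_refl y⟩) hy0
  have hF0 : FF γ n 0 = 1 := by
    rw [FF, Finset.sum_range_succ']
    simp [poch]
  simp only [hF0, sub_zero, Real.one_rpow, one_mul] at h
  -- h : FF γ n y * (1-y)^γ ≤ 1
  have h1y : (0:ℝ) < 1 - y := by linarith
  have hpos : (0:ℝ) < (1-y)^γ := Real.rpow_pos_of_pos h1y γ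
  rw [Real.rpow_neg (le_of_lt h1y), inv_eq_one_div, le_div_iff₀ hpos]
  exact h

lemma stirling_bound : ∀ (n : ℕ), ∀ (i : ℕ), ∀ r : ℝ, 0 ≤ r →
    (stirling2 n i : ℝ) * r^n / n.factorial ≤ (Real.exp r - 1)^i / i.factorial := by
  intro n
  induction n with
  | zero =>
    intro i r hr
    match i with
    | 0 => simp [stirling2]
    | j+1 =>
      have he : (0:ℝ) ≤ Real.exp r - 1 := by linarith [Real.one_le_exp hr]
      simp only [stirling2, Nat.cast_zero, zero_mul, zero_div]
      positivity
  | succ n ih =>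
    intro i r hr
    match i with
    | 0 => simp [stirling2]
    | j+1 =>
      -- h t := (exp t - 1)^(j+1)/(j+1)! - stirling2 (n+1) (j+1) * t^(n+1)/(n+1)!
      set c : ℝ := (stirling2 (n+1) (j+1) : ℝ) with hc
      have key : MonotoneOn (fun t : ℝ => (Real.exp t - 1)^(j+1) / (j+1).factorial
          - c * t^(n+1) / (n+1).factorial) (Set.Ici 0) := by
        have hd : ∀ t : ℝ, HasDerivAt (fun t : ℝ => (Real.exp t - 1)^(j+1) / (j+1).factorial
            - c * t^(n+1) / (n+1).factorial)
            ((Real.exp t - 1)^j * Real.exp t / j.factorial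
              - c * t^n / n.factorial) t := by
          intro t
          have h1 : HasDerivAt (fun t : ℝ => (Real.exp t - 1)^(j+1))
              ((↑(j+1)) * (Real.exp t - 1)^j * Real.exp t) t := by
            simpa using ((Real.hasDerivAt_exp t).sub_const 1).fun_pow (j+1)
          have h2 : HasDerivAt (fun t : ℝ => t^(n+1)) ((↑(n+1)) * t^n) t := by
            simpa using hasDerivAt_pow (n+1) t
          have := ((h1.div_const ((j+1).factorial : ℝ)).sub
            (((h2.const_mul c)).div_const ((n+1).factorial : ℝ)))
          refine this.congr_deriv ?_
          rw [Nat.factorial_succ n, Nat.factorial_succ j]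
          push_cast
          have hj : (j.factorial : ℝ) ≠ 0 := by positivity
          have hn : (n.factorial : ℝ) ≠ 0 := by positivity
          field_simp
        apply monotoneOn_of_deriv_nonneg (convex_Ici 0)
        · exact fun t _ => ((hd t).continuousAt).continuousWithinAt
        · exact fun t _ => ((hd t).differentiableAt).differentiableWithinAt
        · intro t ht
          rw [interior_Ici] at ht
          rw [(hd t).deriv]
          have ht' : (0:ℝ) ≤ t := le_of_lt ht
          have he : (0:ℝ) ≤ Real.exp t - 1 := by
            have := Real.one_le_exp ht'
            linarith
          have hrec : c = (j+1) * (stirling2 n (j+1) : ℝ) + (stirling2 n j : ℝ) := by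
            rw [hc]; show ((stirling2 (n+1) (j+1) : ℕ) : ℝ) = _
            rw [show stirling2 (n+1) (j+1) = (j+1) * stirling2 n (j+1) + stirling2 n j from rfl]
            push_cast; ring
          have b1 := ih (j+1) t ht'
          have b2 := ih j t ht'
          have e1 : ((j+1) : ℝ) * ((Real.exp t - 1)^(j+1) / (j+1).factorial)
              = (Real.exp t - 1)^(j+1) / j.factorial := by
            rw [Nat.factorial_succ]; push_cast
            have hj : (j.factorial : ℝ) ≠ 0 := by positivity
            field_simp
          have : c * t^n / n.factorial ≤ (Real.exp t - 1)^j * Real.exp t / j.factorial := by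
            rw [hrec]
            have : ((j+1) * (stirling2 n (j+1) : ℝ) + (stirling2 n j : ℝ)) * t^n / n.factorial
                = ((j:ℝ)+1) * ((stirling2 n (j+1) : ℝ) * t^n / n.factorial)
                  + (stirling2 n j : ℝ) * t^n / n.factorial := by push_cast; ring
            rw [this]
            have hle : ((j:ℝ)+1) * ((stirling2 n (j+1) : ℝ) * t^n / n.factorial)
                  + (stirling2 n j : ℝ) * t^n / n.factorial
                ≤ ((j:ℝ)+1) * ((Real.exp t - 1)^(j+1) / (j+1).factorial)
                  + (Real.exp t - 1)^j / j.factorial := by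
              have hj1 : (0:ℝ) ≤ (j:ℝ)+1 := by positivity
              exact add_le_add (mul_le_mul_of_nonneg_left b1 hj1) b2
            refine hle.trans ?_
            rw [show ((j:ℝ)+1) = ((j+1 : ℕ) : ℝ) by push_cast; ring] at *
            rw [e1]
            rw [pow_succ]
            have hj : (0:ℝ) < (j.factorial : ℝ) := by positivity
            rw [← add_div, div_le_div_iff₀ hj hj]
            ring_nf
            nlinarith [pow_nonneg he j]
          linarith
      have h0 := key (Set.mem_Ici.2 (le_refl (0:ℝ))) (Set.mem_Ici.2 hr) hr
      simp only [Real.exp_zero, sub_self, zero_pow (Nat.succ_ne_zero j),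
        zero_div, zero_pow (Nat.succ_ne_zero n), mul_zero, zero_div, sub_zero] at h0
      -- h0 : 0 - c*0/... ≤ f r
      have : 0 ≤ (Real.exp r - 1)^(j+1) / (j+1).factorial - c * r^(n+1) / (n+1).factorial := by
        simpa using h0
      linarith

lemma gen_bound (α γ : ℝ) (hα0 : 0 < α) (hα1 : α < 1) (hγ : 0 < γ) (n : ℕ)
    (r : ℝ) (hr0 : 0 < r) (hr1 : r < Real.log (1/α)) :
    |tcoef α γ n| ≤ (1 - α) ^ γ * (γ^n)⁻¹ * (Nat.factorial n) *
      (r^n)⁻¹ * (1 - α * Real.exp r) ^ (-γ) := by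
  have h1α : (0:ℝ) < 1 - α := by linarith
  set x : ℝ := α / (1 - α) with hx
  have hx0 : 0 ≤ x := by positivity
  have hαe : α * Real.exp r < 1 := by
    have h2 : Real.exp r < 1/α := by
      calc Real.exp r < Real.exp (Real.log (1/α)) := Real.exp_lt_exp.2 hr1
        _ = 1/α := Real.exp_log (by positivity)
    calc α * Real.exp r < α * (1/α) := by
          exact mul_lt_mul_of_pos_left h2 hα0
      _ = 1 := by field_simp
  have he1 : (0:ℝ) ≤ Real.exp r - 1 := by
    linarith [Real.one_le_exp (le_of_lt hr0)]
  set y : ℝ := x * (Real.exp r - 1) with hy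
  have hy0 : 0 ≤ y := mul_nonneg hx0 he1
  have hy1 : y < 1 := by
    rw [hy, hx, div_mul_eq_mul_div, div_lt_one h1α]
    nlinarith
  -- |tcoef| = (γ^n)⁻¹ * S
  have hterm : ∀ i, 0 ≤ (stirling2 n i : ℝ) * poch γ i * x^i := by
    intro i
    have := poch_nonneg hγ i
    positivity
  set S : ℝ := ∑ i ∈ Finset.range (n+1), (stirling2 n i : ℝ) * poch γ i * x^i with hS
  have hS0 : 0 ≤ S := Finset.sum_nonneg fun i _ => hterm i
  have habs : |tcoef α γ n| = (γ^n)⁻¹ * S := by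
    rw [tcoef, abs_mul, abs_mul, abs_pow, abs_neg, abs_one, one_pow, one_mul,
      abs_inv, abs_pow, abs_of_pos hγ, abs_of_nonneg hS0]
  rw [habs]
  -- S ≤ n!/r^n * FF γ n y
  have hSle : S ≤ (Nat.factorial n : ℝ) / r^n * FF γ n y := by
    rw [hS, FF, Finset.mul_sum]
    apply Finset.sum_le_sum
    intro i _
    have hsb := stirling_bound n i r (le_of_lt hr0)
    have hrn : (0:ℝ) < r^n := by positivity
    have hfn : (0:ℝ) < (Nat.factorial n : ℝ) := by positivity
    have hsb' : (stirling2 n i : ℝ) ≤ (Nat.factorial n : ℝ) / r^n * ((Real.exp r - 1)^i / i.factorial) := by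
      rw [div_mul_eq_mul_div, le_div_iff₀ hrn] at *
      calc (stirling2 n i : ℝ) * r^n = (stirling2 n i : ℝ) * r^n / n.factorial * n.factorial := by
            field_simp
        _ ≤ (Real.exp r - 1)^i / i.factorial * n.factorial := by
            exact mul_le_mul_of_nonneg_right hsb (le_of_lt hfn)
        _ = (Nat.factorial n : ℝ) * ((Real.exp r - 1)^i / i.factorial) := by ring
    have hpi := poch_nonneg hγ i
    calc (stirling2 n i : ℝ) * poch γ i * x^i
        ≤ ((Nat.factorial n : ℝ) / r^n * ((Real.exp r - 1)^i / i.factorial)) * poch γ i * x^i := by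
          apply mul_le_mul_of_nonneg_right _ (by positivity)
          exact mul_le_mul_of_nonneg_right hsb' hpi
      _ = (Nat.factorial n : ℝ) / r^n * (poch γ i * y^i / i.factorial) := by
          rw [hy, mul_pow]
          field_simp
  -- FF ≤ (1-y)^{-γ} and 1-y = (1-α e^r)/(1-α)
  have hFle := FF_le hγ n hy0 hy1
  have h1y : 1 - y = (1 - α * Real.exp r) / (1 - α) := by
    rw [hy, hx]
    field_simp
    ring
  have hrw : (1 - y) ^ (-γ) = (1 - α * Real.exp r) ^ (-γ) * (1 - α) ^ γ := by
    rw [h1y, Real.div_rpow (by linarith) (le_of_lt h1α), Real.rpow_neg (le_of_lt h1α),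
      div_inv_eq_mul]
  have hrn : (0:ℝ) < r^n := by positivity
  have hγn : (0:ℝ) < (γ^n)⁻¹ := by positivity
  calc (γ^n)⁻¹ * S ≤ (γ^n)⁻¹ * ((Nat.factorial n : ℝ) / r^n * ((1 - α * Real.exp r) ^ (-γ) * (1 - α) ^ γ)) := by
        apply mul_le_mul_of_nonneg_left _ (le_of_lt hγn)
        refine hSle.trans ?_
        rw [← hrw]
        apply mul_le_mul_of_nonneg_left hFle (by positivity)
    _ = (1 - α) ^ γ * (γ^n)⁻¹ * (Nat.factorial n) * (r^n)⁻¹ * (1 - α * Real.exp r) ^ (-γ) := by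
        field_simp

/-- For `0 < α < 1`, `γ > 0`, `n ≥ 1` there is a unique `r₀ > 0` with
`α e^{r₀}(n + γ r₀) = n`; it satisfies `n(n+γ)^{−1} log(1/α) < r₀ < log(1/α)`, and
`|t_n| ≤ (1−α)^γ n! (γ r₀)^{−n−γ} (n + γ r₀)^γ`. Moreover, for all `0 < r < log(1/α)`,
`|t_n| ≤ (1−α)^γ γ^{−n} n! r^{−n} (1 − α e^r)^{−γ}`. -/
theorem tcoef_saddle_bound (α γ : ℝ) (hα0 : 0 < α) (hα1 : α < 1) (hγ : 0 < γ)
    (n : ℕ) (hn : 1 ≤ n) :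
    (∃ r₀ : ℝ, (0 < r₀ ∧ α * Real.exp r₀ * ((n : ℝ) + γ * r₀) = (n : ℝ)) ∧
      (∀ r : ℝ, 0 < r → α * Real.exp r * ((n : ℝ) + γ * r) = (n : ℝ) → r = r₀) ∧
      (n : ℝ) / ((n : ℝ) + γ) * Real.log (1/α) < r₀ ∧ r₀ < Real.log (1/α) ∧
      |tcoef α γ n| ≤ (1 - α) ^ γ * (Nat.factorial n) *
        (γ * r₀) ^ (-(n : ℝ) - γ) * ((n : ℝ) + γ * r₀) ^ γ) ∧
    (∀ r : ℝ, 0 < r → r < Real.log (1/α) →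
      |tcoef α γ n| ≤ (1 - α) ^ γ * (γ^n)⁻¹ * (Nat.factorial n) *
        (r^n)⁻¹ * (1 - α * Real.exp r) ^ (-γ)) := by
  have hn0 : (0:ℝ) < (n:ℝ) := by exact_mod_cast Nat.pos_of_ne_zero (by omega)
  have hL : 0 < Real.log (1/α) := Real.log_pos (by rw [one_div]; exact (one_lt_inv₀ hα0).2 hα1)
  set L : ℝ := Real.log (1/α) with hLdef
  set g : ℝ → ℝ := fun r => α * Real.exp r * ((n : ℝ) + γ * r) with hg
  have hmono : StrictMonoOn g (Set.Ici 0) := by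
    intro a ha b hb hab
    simp only [hg]
    have h1 : Real.exp a < Real.exp b := Real.exp_lt_exp.2 hab
    have h2 : (n:ℝ) + γ * a < (n:ℝ) + γ * b := by nlinarith
    have h3 : 0 < (n:ℝ) + γ * a := by
      have : (0:ℝ) ≤ a := ha
      nlinarith
    exact mul_lt_mul'' (mul_lt_mul_of_pos_left h1 hα0) h2
      (by positivity) (le_of_lt h3)
  have hgL : g L = (n:ℝ) + γ * L := by
    simp only [hg]
    rw [Real.exp_log (by positivity)]
    field_simp
  have hg0 : g 0 = α * n := by simp [hg]
  have hcont : ContinuousOn g (Set.Icc 0 L) := by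
    apply Continuous.continuousOn
    continuity
  have hmem : (n:ℝ) ∈ Set.Ioo (g 0) (g L) := by
    constructor
    · rw [hg0]; nlinarith
    · rw [hgL]; nlinarith
  obtain ⟨r₀, hr₀mem, hgr₀⟩ := intermediate_value_Ioo (le_of_lt hL) hcont hmem
  obtain ⟨hr₀0, hr₀L⟩ := hr₀mem
  constructor
  · refine ⟨r₀, ⟨hr₀0, hgr₀⟩, ?_, ?_, hr₀L, ?_⟩
    · -- uniqueness
      intro r hr hgr
      exact hmono.injOn (Set.mem_Ici.2 (le_of_lt hr)) (Set.mem_Ici.2 (le_of_lt hr₀0))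
        (show g r = g r₀ from hgr.trans hgr₀.symm)
    · -- lower bound
      set c : ℝ := (n:ℝ) / ((n:ℝ) + γ) with hc
      set s : ℝ := γ / ((n:ℝ) + γ) with hs
      have hnγ : (0:ℝ) < (n:ℝ) + γ := by linarith
      have hc0 : 0 < c := by positivity
      have hs0 : 0 < s := by positivity
      have hcs : c + s = 1 := by
        rw [hc, hs, ← add_div, div_self (ne_of_gt hnγ)]
      have hlogα : Real.log α = -L := by
        rw [hLdef, one_div, Real.log_inv, neg_neg]
      have hgcL : g (c * L) = Real.exp (-(s * L)) * ((n:ℝ) * (1 + s * L)) := by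
        simp only [hg]
        have e1 : α * Real.exp (c * L) = Real.exp (-(s*L)) := by
          rw [← Real.exp_log hα0, ← Real.exp_add, hlogα]
          congr 1
          nlinarith [hcs]
        have e2 : (n:ℝ) + γ * (c * L) = (n:ℝ) * (1 + s * L) := by
          rw [hc, hs]
          field_simp
        rw [e1, e2]
      have hgcLlt : g (c * L) < (n:ℝ) := by
        rw [hgcL]
        have hx : 0 < s * L := by positivity
        have hexp := Real.add_one_lt_exp (ne_of_gt hx)
        rw [Real.exp_neg]
        rw [inv_mul_lt_iff₀ (Real.exp_pos _)]
        nlinarith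
      by_contra hcon
      push_neg at hcon
      have hle : g r₀ ≤ g (c * L) :=
        hmono.monotoneOn (Set.mem_Ici.2 (le_of_lt hr₀0))
          (Set.mem_Ici.2 (by positivity)) hcon
      rw [hgr₀] at hle
      linarith
    · -- saddle bound
      have hgen := gen_bound α γ hα0 hα1 hγ n r₀ hr₀0 hr₀L
      have hd : (0:ℝ) < (n:ℝ) + γ * r₀ := by nlinarith
      have hγr : (0:ℝ) < γ * r₀ := by positivity
      have heq : 1 - α * Real.exp r₀ = γ * r₀ / ((n:ℝ) + γ * r₀) := by
        have : α * Real.exp r₀ = (n:ℝ) / ((n:ℝ) + γ * r₀) := by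
          rw [eq_div_iff (ne_of_gt hd)]
          exact hgr₀
        rw [this]
        field_simp
        ring
      have hrw : (1 - α * Real.exp r₀) ^ (-γ) = (γ * r₀) ^ (-γ) * ((n:ℝ) + γ * r₀) ^ γ := by
        rw [heq, Real.div_rpow (le_of_lt hγr) (le_of_lt hd), Real.rpow_neg (le_of_lt hd),
          div_inv_eq_mul]
      have hpow : (γ^n)⁻¹ * (r₀^n)⁻¹ = (γ * r₀) ^ (-(n:ℝ)) := by
        rw [Real.rpow_neg (le_of_lt hγr), Real.rpow_natCast, mul_pow, mul_inv]
      have hfin : (γ * r₀) ^ (-(n:ℝ)) * (γ * r₀) ^ (-γ) = (γ * r₀) ^ (-(n:ℝ) - γ) := by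
        rw [← Real.rpow_add hγr]
        ring_nf
      calc |tcoef α γ n| ≤ (1 - α) ^ γ * (γ^n)⁻¹ * (Nat.factorial n) *
            (r₀^n)⁻¹ * (1 - α * Real.exp r₀) ^ (-γ) := hgen
        _ = (1 - α) ^ γ * (Nat.factorial n) *
            (γ * r₀) ^ (-(n : ℝ) - γ) * ((n : ℝ) + γ * r₀) ^ γ := by
            rw [hrw, ← hfin, ← hpow]
            ring
  · intro r hr0 hr1
    exact gen_bound α γ hα0 hα1 hγ n r hr0 hr1
end

section
/- Let m ∈ ℕ with m ≥ 2, let ω_m = e^{2πi/m}, and let z ∈ ℂ be such that z^m ≠ n^m for every positive integer n (equivalently, z ∉ ℕ·ω_m^{−j} for all j = 0,…,m−1). Then the infinite product ∏_{n=1}^∞ n^m/(n^m − z^m) converges and equals ∏_{j=0}^{m−1} Γ(1 − ω_m^j z), where Γ is the complex Gamma function. Furthermore, if |z| < 1 then ∏_{j=0}^{m−1} Γ(1 − ω_m^j z) = exp(∑_{k=1}^∞ (ζ(mk)/k) z^{mk}), where ζ is the Riemann zeta function. -/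
open Finset in
private lemma cpow_finset_sum {x : ℂ} (hx : x ≠ 0) {ι : Type*} (s : Finset ι) (f : ι → ℂ) :
    x ^ (∑ i ∈ s, f i) = ∏ i ∈ s, x ^ f i := by
  classical
  induction s using Finset.cons_induction with
  | empty => simp
  | cons a s ha ih => rw [Finset.sum_cons, Finset.prod_cons, Complex.cpow_add _ _ hx, ih]

private lemma gammaSeq_step (w : ℂ) (hw : ∀ n : ℕ, 0 < n → (n:ℂ) - w ≠ 0) (N : ℕ) (hN : 1 ≤ N) :
    ∏ n ∈ Finset.Icc 1 N, ((n:ℂ) / ((n:ℂ) - w)) =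
      Complex.GammaSeq (1 - w) N * (N:ℂ) ^ (w - 1) * ((N:ℂ) + 1 - w) := by
  have hNc : (N:ℂ) ≠ 0 := Nat.cast_ne_zero.mpr (by omega)
  have hfac : ∏ n ∈ Finset.Icc 1 N, (n:ℂ) = (N.factorial : ℂ) := by
    rw [← Nat.cast_prod, ← Finset.Ico_add_one_right_eq_Icc, Finset.prod_Ico_id_eq_factorial]
  have hD : ∏ n ∈ Finset.Icc 1 N, ((n:ℂ) - w) ≠ 0 :=
    Finset.prod_ne_zero_iff.mpr fun n hn => hw n (by simp at hn; omega)
  have hN1 : (N:ℂ) + 1 - w ≠ 0 := fun h =>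
    hw (N+1) (by omega) (by push_cast; linear_combination h)
  have hgs : ∏ i ∈ Finset.range (N+1), ((1 - w) + i) =
      (∏ n ∈ Finset.Icc 1 N, ((n:ℂ) - w)) * ((N:ℂ) + 1 - w) := by
    rw [Finset.prod_range_succ]
    congr 1
    · rw [← Finset.Ico_add_one_right_eq_Icc, Finset.prod_Ico_eq_prod_range]
      rw [Nat.add_sub_cancel]
      refine Finset.prod_congr rfl fun i hi => ?_
      push_cast; ring
    · ring
  have h1 : (N:ℂ) ^ ((1:ℂ) - w) * (N:ℂ) ^ (w - 1) = 1 := by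
    rw [← Complex.cpow_add _ _ hNc, show (1:ℂ) - w + (w - 1) = 0 by ring, Complex.cpow_zero]
  rw [Finset.prod_div_distrib, hfac, Complex.GammaSeq, hgs]
  have hfc : (N.factorial : ℂ) ≠ 0 := Nat.cast_ne_zero.mpr N.factorial_ne_zero
  field_simp
  linear_combination (-1 : ℂ) * h1

open Filter in
/-- For `m ≥ 2`, `ω_m = e^{2πi/m}`, and `z ∈ ℂ` with `z^m ≠ n^m` for all positive integers `n`:
`∏_{n=1}^∞ n^m/(n^m − z^m)` converges to `∏_{j=0}^{m−1} Γ(1 − ω_m^j z)`. Furthermore, if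
`|z| < 1` then `∏_{j=0}^{m−1} Γ(1 − ω_m^j z) = exp(∑_{k≥1} (ζ(mk)/k) z^{mk})`. -/
theorem gamma_products (m : ℕ) (hm : 2 ≤ m)
    (ω : ℂ) (hω : ω = Complex.exp (2 * (Real.pi : ℂ) * Complex.I / (m : ℂ)))
    (z : ℂ) (hz : ∀ n : ℕ, 0 < n → z^m ≠ (n : ℂ)^m) :
    Tendsto (fun N : ℕ => ∏ n ∈ Finset.Icc 1 N, ((n : ℂ)^m / ((n : ℂ)^m - z^m)))
      atTop (nhds (∏ j ∈ Finset.range m, Complex.Gamma (1 - ω^j * z))) ∧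
    (‖z‖ < 1 →
      ∏ j ∈ Finset.range m, Complex.Gamma (1 - ω^j * z)
        = Complex.exp (∑' k : ℕ, riemannZeta ((m * (k+1) : ℕ) : ℂ) / ((k : ℂ)+1)
            * z^(m*(k+1)))) := by
  have hm0 : m ≠ 0 := by omega
  have hprim : IsPrimitiveRoot ω m := hω ▸ Complex.isPrimitiveRoot_exp m hm0
  -- the factorization x^m - y^m = ∏ (x - ω^j y)
  have key : ∀ x y : ℂ, x ^ m - y ^ m = ∏ j ∈ Finset.range m, (x - ω ^ j * y) := by
    intro x y
    rw [hprim.pow_sub_pow_eq_prod_sub_mul x y (by omega)]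
    have himg : (Finset.range m).image (ω ^ ·) = Polynomial.nthRootsFinset m (1:ℂ) := by
      apply Finset.eq_of_subset_of_card_le
      · intro t ht
        simp only [Finset.mem_image] at ht
        obtain ⟨j, hj, rfl⟩ := ht
        exact (Polynomial.mem_nthRootsFinset (by omega) 1).mpr
          (by rw [← pow_mul, mul_comm, pow_mul, hprim.pow_eq_one, one_pow])
      · rw [hprim.card_nthRootsFinset, Finset.card_image_of_injOn hprim.injOn_pow]
        simp
    rw [← himg, Finset.prod_image (fun a ha b hb h => hprim.injOn_pow ha hb h)]
  -- roots sum to zero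
  have hsum : ∑ j ∈ Finset.range m, ω ^ j = 0 := by
    rw [geom_sum_eq (hprim.ne_one (by omega)), hprim.pow_eq_one, sub_self, zero_div]
  -- nonvanishing of linear factors
  have hden : ∀ (j : ℕ) (n : ℕ), 0 < n → (n:ℂ) - ω ^ j * z ≠ 0 := by
    intro j n hn h
    refine hz n hn ?_
    have hωj : (ω ^ j) ^ m = 1 := by
      rw [← pow_mul, mul_comm, pow_mul, hprim.pow_eq_one, one_pow]
    calc z ^ m = (ω ^ j) ^ m * z ^ m := by rw [hωj, one_mul]
      _ = (ω ^ j * z) ^ m := (mul_pow _ _ _).symm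
      _ = (n : ℂ) ^ m := by rw [show ω ^ j * z = (n:ℂ) by linear_combination -h]
  -- the main finite-product identity
  have hPN : ∀ N : ℕ, 1 ≤ N →
      ∏ n ∈ Finset.Icc 1 N, ((n : ℂ)^m / ((n : ℂ)^m - z^m)) =
      (∏ j ∈ Finset.range m, Complex.GammaSeq (1 - ω^j * z) N) *
        ((((N:ℂ)+1)^m - z^m) / (N:ℂ)^m) := by
    intro N hN
    have hNc : (N:ℂ) ≠ 0 := Nat.cast_ne_zero.mpr (by omega)
    have h1 : ∀ n ∈ Finset.Icc 1 N, (n:ℂ)^m / ((n:ℂ)^m - z^m)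
        = ∏ j ∈ Finset.range m, ((n:ℂ) / ((n:ℂ) - ω^j * z)) := by
      intro n hn
      rw [Finset.prod_div_distrib, Finset.prod_const, Finset.card_range, key]
    rw [Finset.prod_congr rfl h1, Finset.prod_comm,
      Finset.prod_congr rfl (fun j _ => gammaSeq_step (ω^j * z) (hden j) N hN),
      Finset.prod_mul_distrib, Finset.prod_mul_distrib]
    have h2 : ∏ j ∈ Finset.range m, (N:ℂ) ^ (ω^j * z - 1) = ((N:ℂ)^m)⁻¹ := by
      rw [← cpow_finset_sum hNc]
      have : ∑ j ∈ Finset.range m, (ω^j * z - 1) = -(m:ℂ) := by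
        rw [Finset.sum_sub_distrib, ← Finset.sum_mul, hsum, zero_mul]
        simp
      rw [this, Complex.cpow_neg, Complex.cpow_natCast]
    have h3 : ∏ j ∈ Finset.range m, ((N:ℂ) + 1 - ω^j * z) = ((N:ℂ)+1)^m - z^m :=
      (key _ _).symm
    rw [h2, h3]; ring
  -- the correction factor tends to 1
  have hu : Tendsto (fun N : ℕ => ((N:ℂ))⁻¹) atTop (nhds 0) := by
    have h1 : Tendsto (fun N : ℕ => ((N:ℝ))⁻¹) atTop (nhds 0) :=
      tendsto_inv_atTop_zero.comp tendsto_natCast_atTop_atTop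
    have h := (Complex.continuous_ofReal.tendsto (0:ℝ)).comp h1
    refine Tendsto.congr (fun N => ?_) (by simpa using h)
    simp [Function.comp]
  have hc : Tendsto (fun N : ℕ => ((((N:ℂ)+1)^m - z^m) / (N:ℂ)^m)) atTop (nhds 1) := by
    have h : Tendsto (fun N : ℕ => (1 + (N:ℂ)⁻¹)^m - (z * (N:ℂ)⁻¹)^m) atTop
        (nhds ((1 + 0)^m - (z * 0)^m)) :=
      ((tendsto_const_nhds.add hu).pow m).sub ((tendsto_const_nhds.mul hu).pow m)
    simp only [add_zero, one_pow, mul_zero, zero_pow hm0, sub_zero] at h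
    refine h.congr' ?_
    filter_upwards [eventually_ge_atTop 1] with N hN
    have hNc : (N:ℂ) ≠ 0 := Nat.cast_ne_zero.mpr (by omega)
    field_simp
    rw [sub_mul, div_pow, div_pow, div_mul_cancel₀ _ (pow_ne_zero _ hNc), div_mul_cancel₀ _ (pow_ne_zero _ hNc)]
  have hG : Tendsto (fun N : ℕ => ∏ j ∈ Finset.range m, Complex.GammaSeq (1 - ω^j * z) N)
      atTop (nhds (∏ j ∈ Finset.range m, Complex.Gamma (1 - ω^j * z))) :=
    tendsto_finset_prod _ (fun j _ => Complex.GammaSeq_tendsto_Gamma _)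
  have hmain : Tendsto (fun N : ℕ => ∏ n ∈ Finset.Icc 1 N, ((n : ℂ)^m / ((n : ℂ)^m - z^m)))
      atTop (nhds (∏ j ∈ Finset.range m, Complex.Gamma (1 - ω^j * z))) := by
    have := hG.mul hc
    rw [mul_one] at this
    refine this.congr' ?_
    filter_upwards [eventually_ge_atTop 1] with N hN
    exact (hPN N hN).symm
  refine ⟨hmain, ?_⟩
  intro hz1
  have hzm : ‖z‖ ^ m < 1 := pow_lt_one₀ (norm_nonneg z) hz1 hm0
  set b : ℕ → ℂ := fun n => z^m / ((n:ℂ)+1)^m with hb_def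
  have hnorm1 : ∀ n : ℕ, ‖((n:ℂ)+1)‖ = (n:ℝ)+1 := by
    intro n
    rw [show ((n:ℂ)+1) = ((n+1:ℕ):ℂ) by push_cast; ring, Complex.norm_natCast]
    push_cast; ring
  have hbn : ∀ n : ℕ, ‖b n‖ < 1 := by
    intro n
    have h1 : (1:ℝ) ≤ ((n:ℝ)+1)^m := one_le_pow₀ (by linarith [n.cast_nonneg (α := ℝ)])
    calc ‖b n‖ = ‖z‖ ^ m / ((n:ℝ)+1)^m := by
          rw [hb_def]; simp only [norm_div, norm_pow, hnorm1]
      _ ≤ ‖z‖ ^ m := div_le_self (pow_nonneg (norm_nonneg z) m) h1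
      _ < 1 := hzm
  set F : ℕ × ℕ → ℂ :=
    fun p => z^(m*(p.2+1)) / (((p.2:ℂ)+1) * ((p.1:ℂ)+1)^(m*(p.2+1))) with hF_def
  have hFnorm : ∀ p : ℕ × ℕ,
      ‖F p‖ ≤ (1/((p.1:ℝ)+1)^2) * (‖z‖ ^ m)^(p.2+1) := by
    rintro ⟨n, k⟩
    have hn1 : (1:ℝ) ≤ (n:ℝ)+1 := by linarith [n.cast_nonneg (α := ℝ)]
    have h1 : ‖F (n,k)‖
        = ‖z‖^(m*(k+1)) / (((k:ℝ)+1) * ((n:ℝ)+1)^(m*(k+1))) := by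
      rw [hF_def]
      simp only [norm_div, norm_mul, norm_pow, hnorm1]
    rw [h1]
    have hd : (1:ℝ)*((n:ℝ)+1)^2 ≤ ((k:ℝ)+1)*((n:ℝ)+1)^(m*(k+1)) := by
      have h2 : ((n:ℝ)+1)^2 ≤ ((n:ℝ)+1)^(m*(k+1)) := pow_le_pow_right₀ hn1 (by nlinarith)
      have h3 : (1:ℝ) ≤ (k:ℝ)+1 := by linarith [k.cast_nonneg (α := ℝ)]
      exact mul_le_mul h3 h2 (by positivity) (by linarith)
    calc ‖z‖^(m*(k+1)) / (((k:ℝ)+1) * ((n:ℝ)+1)^(m*(k+1)))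
        ≤ ‖z‖^(m*(k+1)) / (1 * ((n:ℝ)+1)^2) :=
          div_le_div_of_nonneg_left (by positivity) (by positivity) hd
      _ = (1/((n:ℝ)+1)^2) * (‖z‖ ^ m)^(k+1) := by
          rw [← pow_mul]; field_simp
  have hFs : Summable F := by
    apply Summable.of_norm
    refine Summable.of_nonneg_of_le (fun p => norm_nonneg _) hFnorm ?_
    refine Summable.mul_of_nonneg (f := fun n : ℕ => 1/((n:ℝ)+1)^2)
      (g := fun k : ℕ => (‖z‖ ^ m)^(k+1)) ?_ ?_ ?_ ?_
    · have h0 : Summable (fun n : ℕ => 1/((n:ℝ))^2) := Real.summable_one_div_nat_pow.mpr one_lt_two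
      have := (summable_nat_add_iff 1).mpr h0
      apply this.congr
      intro n; push_cast; ring
    · have h0 : Summable (fun k : ℕ => (‖z‖ ^ m)^k) :=
        summable_geometric_of_lt_one (by positivity) hzm
      apply (h0.mul_left (‖z‖ ^ m)).congr
      intro k; rw [← pow_succ']
    · intro n; positivity
    · intro k; positivity
  have hcur : ∀ n : ℕ, HasSum (fun k => F (n, k)) (-(Complex.log (1 - b n))) := by
    intro n
    have H : HasSum (fun k : ℕ => (b n)^k / k) (-(Complex.log (1 - b n))) :=
      Complex.hasSum_taylorSeries_neg_log (hbn n)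
    have H1 := (hasSum_nat_add_iff' 1).mpr H
    have h0 : ∑ i ∈ Finset.range 1, ((b n)^i / (i:ℂ)) = 0 := by simp
    rw [h0, sub_zero] at H1
    have heq : (fun k : ℕ => F (n, k)) = fun k : ℕ => (b n)^(k+1) / ((k+1 : ℕ):ℂ) := by
      funext k
      rw [hF_def, hb_def]
      simp only
      rw [div_pow, ← pow_mul, ← pow_mul, div_div]
      push_cast
      rw [mul_comm (((n:ℂ)+1)^(m*(k+1))) ((k:ℂ)+1)]
    rw [heq]
    exact H1
  have hfib : HasSum (fun n => -(Complex.log (1 - b n))) (∑' p, F p) :=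
    hFs.hasSum.prod_fiberwise hcur
  have hexp : Tendsto (fun N : ℕ =>
      Complex.exp (∑ n ∈ Finset.range N, -(Complex.log (1 - b n)))) atTop
      (nhds (Complex.exp (∑' p, F p))) :=
    (Complex.continuous_exp.tendsto _).comp hfib.tendsto_sum_nat
  have hpartial : ∀ N : ℕ,
      Complex.exp (∑ n ∈ Finset.range N, -(Complex.log (1 - b n)))
        = ∏ n ∈ Finset.Icc 1 N, ((n : ℂ)^m / ((n : ℂ)^m - z^m)) := by
    intro N
    rw [Complex.exp_sum, ← Finset.Ico_add_one_right_eq_Icc, Finset.prod_Ico_eq_prod_range, Nat.add_sub_cancel]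
    refine Finset.prod_congr rfl fun i _ => ?_
    have hpow : ((i:ℂ)+1)^m ≠ 0 :=
      pow_ne_zero _ (by exact_mod_cast (Nat.cast_add_one_ne_zero i : ((i:ℂ)+1) ≠ 0))
    have hne : ((i:ℂ)+1)^m - z^m ≠ 0 := sub_ne_zero.mpr
      (fun h => hz (i+1) (Nat.succ_pos i) (by push_cast; linear_combination -h))
    have h1 : (1:ℂ) - b i = (((i:ℂ)+1)^m - z^m)/(((i:ℂ)+1)^m) := by
      rw [hb_def]; field_simp
    rw [h1, Complex.exp_neg, Complex.exp_log (div_ne_zero hne hpow), inv_div]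
    push_cast
    ring_nf
  have hexp' : Tendsto (fun N : ℕ => ∏ n ∈ Finset.Icc 1 N, ((n : ℂ)^m / ((n : ℂ)^m - z^m)))
      atTop (nhds (Complex.exp (∑' p, F p))) := hexp.congr hpartial
  have huniq : ∏ j ∈ Finset.range m, Complex.Gamma (1 - ω^j * z)
      = Complex.exp (∑' p, F p) := tendsto_nhds_unique hmain hexp'
  rw [huniq]
  congr 1
  have hFs' : Summable (Function.uncurry fun n k : ℕ => F (n, k)) := hFs
  have hswap : ∑' p : ℕ × ℕ, F p = ∑' (k : ℕ) (n : ℕ), F (n, k) :=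
    (hFs.tsum_prod).trans (hFs'.tsum_comm).symm
  rw [hswap]
  refine tsum_congr fun k => ?_
  have hs : 1 < ((m*(k+1):ℕ):ℂ).re := by
    simp only [Complex.natCast_re]
    exact_mod_cast (by nlinarith : 1 < m*(k+1))
  have hzeta := zeta_eq_tsum_one_div_nat_add_one_cpow hs
  have hzsum : ∑' n : ℕ, (1:ℂ)/((n:ℂ)+1)^(m*(k+1)) = riemannZeta ((m*(k+1):ℕ):ℂ) := by
    rw [hzeta]
    exact tsum_congr fun n => by rw [Complex.cpow_natCast]
  calc ∑' n : ℕ, F (n,k)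
      = ∑' n : ℕ, (z^(m*(k+1)) / ((k:ℂ)+1)) * ((1:ℂ)/((n:ℂ)+1)^(m*(k+1))) := by
        refine tsum_congr fun n => ?_
        rw [hF_def]
        simp only
        rw [mul_one_div, div_div]
    _ = (z^(m*(k+1)) / ((k:ℂ)+1)) * ∑' n : ℕ, (1:ℂ)/((n:ℂ)+1)^(m*(k+1)) := tsum_mul_left
    _ = riemannZeta ((m * (k+1) : ℕ) : ℂ) / ((k : ℂ)+1) * z^(m*(k+1)) := by
        rw [hzsum]; ring
end

section
/- Let m ∈ ℕ with m ≥ 1, let c ∈ ℂ, and let ρ_0, …, ρ_{m−1} ∈ ℂ be the m roots of the equation z^m = −c (so that j^m + c = ∏_{k=0}^{m−1}(j − ρ_k) for all j). Let t ∈ ℂ be such that t is not a positive integer, and for each k, neither 1 − ρ_k nor 1 − t − ρ_k is a nonpositive integer. Then the infinite product ∏_{j=1}^∞ (1 + c j^{−m}) / (1 + c (j − t)^{−m}) converges and equals ∏_{k=0}^{m−1} Γ(1 − t − ρ_k) / (Γ(1 − t) Γ(1 − ρ_k)), where Γ is the complex Gamma function. -/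
open Filter Finset in
lemma aux_one (t a : ℂ) (ht : ∀ n : ℕ, 0 < n → t ≠ (n : ℂ))
    (h1 : ∀ n : ℕ, 1 - a ≠ -(n : ℂ)) (h2 : ∀ n : ℕ, 1 - t - a ≠ -(n : ℂ)) :
    Tendsto (fun N : ℕ => ∏ j ∈ Finset.Icc 1 N,
      (((j:ℂ) - a) * ((j:ℂ) - t)) / ((j:ℂ) * ((j:ℂ) - t - a))) atTop
      (nhds (Complex.Gamma (1 - t - a) / (Complex.Gamma (1 - t) * Complex.Gamma (1 - a)))) := by
  have hGa : Complex.Gamma (1 - a) ≠ 0 := Complex.Gamma_ne_zero h1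
  have hGt : Complex.Gamma (1 - t) ≠ 0 :=
    Complex.Gamma_ne_zero (fun n hn => ht (n+1) n.succ_pos (by push_cast; linear_combination -hn))
  have hG := ((Complex.GammaSeq_tendsto_Gamma (1 - t - a)).mul
      (Complex.GammaSeq_tendsto_Gamma 1)).div
      ((Complex.GammaSeq_tendsto_Gamma (1 - a)).mul (Complex.GammaSeq_tendsto_Gamma (1 - t)))
      (mul_ne_zero hGa hGt)
  have hval : Complex.Gamma (1-t-a) * Complex.Gamma 1 / (Complex.Gamma (1-a) * Complex.Gamma (1-t))
      = Complex.Gamma (1-t-a) / (Complex.Gamma (1-t) * Complex.Gamma (1-a)) := by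
    rw [Complex.Gamma_one]; ring
  rw [← hval, ← Filter.tendsto_add_atTop_iff_nat 1]
  apply Tendsto.congr' _ hG
  filter_upwards [eventually_ge_atTop 1] with n hn
  have hn0 : (n:ℂ) ≠ 0 := Nat.cast_ne_zero.mpr (by omega)
  have hpow : (n:ℂ) ^ ((1:ℂ) - t - a) * (n:ℂ) ^ (1:ℂ)
      = (n:ℂ) ^ ((1:ℂ) - a) * (n:ℂ) ^ ((1:ℂ) - t) := by
    rw [← Complex.cpow_add _ _ hn0, ← Complex.cpow_add _ _ hn0]
    congr 1; ring
  have hcp : ∀ s : ℂ, (n:ℂ) ^ s ≠ 0 := fun s => by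
    simp [Complex.cpow_eq_zero_iff, hn0]
  have hfac : ((Nat.factorial n : ℕ) : ℂ) ≠ 0 := Nat.cast_ne_zero.mpr n.factorial_ne_zero
  have hP1 : (∏ j ∈ range (n+1), ((1:ℂ) + j)) ≠ 0 :=
    prod_ne_zero_iff.mpr (fun j _ h => Nat.cast_add_one_ne_zero j (by linear_combination h))
  have hPa : (∏ j ∈ range (n+1), ((1:ℂ) - a + j)) ≠ 0 :=
    prod_ne_zero_iff.mpr (fun j _ h => h1 j (by linear_combination h))
  have hPt : (∏ j ∈ range (n+1), ((1:ℂ) - t + j)) ≠ 0 :=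
    prod_ne_zero_iff.mpr (fun j _ h => ht (j+1) j.succ_pos (by push_cast; linear_combination -h))
  have hPta : (∏ j ∈ range (n+1), ((1:ℂ) - t - a + j)) ≠ 0 :=
    prod_ne_zero_iff.mpr (fun j _ h => h2 j (by linear_combination h))
  have hsplit : ∏ j ∈ Finset.Icc 1 (n+1),
      (((j:ℂ) - a) * ((j:ℂ) - t)) / ((j:ℂ) * ((j:ℂ) - t - a))
      = ((∏ j ∈ range (n+1), ((1:ℂ) - a + j)) * ∏ j ∈ range (n+1), ((1:ℂ) - t + j))
        / ((∏ j ∈ range (n+1), ((1:ℂ) + j)) * ∏ j ∈ range (n+1), ((1:ℂ) - t - a + j)) := by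
    rw [show Finset.Icc 1 (n+1) = Finset.Ico 1 (n+2) from (Finset.Ico_add_one_right_eq_Icc 1 (n+1)).symm,
      Finset.prod_Ico_eq_prod_range]
    norm_num
    rw [← prod_mul_distrib, ← prod_mul_distrib]
    congr 1 <;> exact prod_congr rfl (fun i _ => by ring)
  rw [hsplit]
  simp only [Pi.div_apply, Complex.GammaSeq]
  have hpow' : (n:ℂ) ^ ((1:ℂ) - t - a) * (n:ℂ) = (n:ℂ) ^ ((1:ℂ) - a) * (n:ℂ) ^ ((1:ℂ) - t) := by
    rw [← hpow, Complex.cpow_one]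
  field_simp [hcp ((1:ℂ) - a), hcp ((1:ℂ) - t)]
  linear_combination hpow

open Filter in
/-- Let `m ≥ 1`, `c ∈ ℂ`, and let `ρ_0,…,ρ_{m−1}` be the roots of `z^m = −c`, so that
`w^m + c = ∏_k (w − ρ_k)` for all `w`. If `t` is not a positive integer and, for each `k`,
neither `1 − ρ_k` nor `1 − t − ρ_k` is a nonpositive integer, then
`∏_{j=1}^∞ (1 + c j^{−m})/(1 + c (j−t)^{−m})` converges to
`∏_{k=0}^{m−1} Γ(1 − t − ρ_k)/(Γ(1 − t) Γ(1 − ρ_k))`. -/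
theorem gamma_product_general (m : ℕ) (hm : 1 ≤ m) (c : ℂ) (ρ : Fin m → ℂ)
    (hρ : ∀ w : ℂ, w^m + c = ∏ k : Fin m, (w - ρ k))
    (t : ℂ) (ht : ∀ n : ℕ, 0 < n → t ≠ (n : ℂ))
    (hρ1 : ∀ k : Fin m, ∀ n : ℕ, 1 - ρ k ≠ -(n : ℂ))
    (hρ2 : ∀ k : Fin m, ∀ n : ℕ, 1 - t - ρ k ≠ -(n : ℂ)) :
    Tendsto (fun N : ℕ =>
        ∏ j ∈ Finset.Icc 1 N, (1 + c / (j : ℂ)^m) / (1 + c / ((j : ℂ) - t)^m))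
      atTop
      (nhds (∏ k : Fin m,
        Complex.Gamma (1 - t - ρ k) / (Complex.Gamma (1 - t) * Complex.Gamma (1 - ρ k)))) := by
  have key : ∀ N : ℕ, ∏ j ∈ Finset.Icc 1 N, (1 + c / (j : ℂ)^m) / (1 + c / ((j : ℂ) - t)^m)
      = ∏ k : Fin m, ∏ j ∈ Finset.Icc 1 N,
          (((j:ℂ) - ρ k) * ((j:ℂ) - t)) / ((j:ℂ) * ((j:ℂ) - t - ρ k)) := by
    intro N
    rw [Finset.prod_comm]
    apply Finset.prod_congr rfl
    intro j hj
    have hj1 : 1 ≤ j := (Finset.mem_Icc.mp hj).1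
    have hjc : (j:ℂ) ≠ 0 := Nat.cast_ne_zero.mpr (by omega)
    have hjm : (j:ℂ)^m ≠ 0 := pow_ne_zero _ hjc
    have hjt : (j:ℂ) - t ≠ 0 := fun h => ht j hj1 (by linear_combination -h)
    have hjtm : ((j:ℂ) - t)^m ≠ 0 := pow_ne_zero _ hjt
    have hjta : ∀ k : Fin m, (j:ℂ) - t - ρ k ≠ 0 := by
      intro k h
      have hc : ((j - 1 : ℕ) : ℂ) = (j:ℂ) - 1 := by
        have := Nat.cast_sub (R := ℂ) hj1; simpa using this
      exact hρ2 k (j - 1) (by rw [hc]; linear_combination h)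
    have e1 : 1 + c / (j:ℂ)^m = (∏ k : Fin m, ((j:ℂ) - ρ k)) / (j:ℂ)^m := by
      rw [← hρ]; field_simp
    have e2 : 1 + c / ((j:ℂ) - t)^m = (∏ k : Fin m, ((j:ℂ) - t - ρ k)) / ((j:ℂ) - t)^m := by
      rw [← hρ]; field_simp
    have hB : (∏ k : Fin m, ((j:ℂ) - t - ρ k)) ≠ 0 :=
      Finset.prod_ne_zero_iff.mpr (fun k _ => hjta k)
    rw [e1, e2, Finset.prod_div_distrib, Finset.prod_mul_distrib, Finset.prod_const,
      Finset.prod_mul_distrib, Finset.prod_const, Finset.card_univ, Fintype.card_fin]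
    field_simp
  simp only [key]
  exact tendsto_finset_prod _ (fun k _ => aux_one t (ρ k) ht (hρ1 k) (hρ2 k))
end
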